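/- arXiv:1602.06200 — 3 statements merged into one kernel-verified Lean document; each statement's English description precedes it below -/
import Mathlib

section
/- The generating function B(z) = (1 - sqrt(1-4z))/(2z) of binary trees counted by the number of internal nodes (so that [z^n]B(z) is the n-th Catalan number) satisfies the functional equation B(z) = 1 + (z/(1-2z)) · B(z^2/(1-2z)^2); this holds as an identity of formal power series (equivalently, for all real z with 0 ≤ z < 1/4, where B(0) := 1). -/
/-- The generating function of binary trees counted by internal nodes,
`B(z) = (1 - sqrt(1-4z))/(2z)`, with `B(0) := 1`. -/
noncomputable def B (z : ℝ) : ℝ :=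
  if z = 0 then 1 else (1 - Real.sqrt (1 - 4 * z)) / (2 * z)

open Finset

lemma centralBinom_le_four_pow (n : ℕ) : n.centralBinom ≤ 4 ^ n := by
  have h : (2*n).choose n ≤ ∑ i ∈ range (2*n+1), (2*n).choose i :=
    Finset.single_le_sum (f := fun i => (2*n).choose i) (fun i _ => Nat.zero_le _)
      (by simp [Nat.lt_succ_iff]; omega)
  rw [Nat.sum_range_choose] at h
  calc n.centralBinom = (2*n).choose n := n.centralBinom_eq_two_mul_choose
    _ ≤ 2^(2*n) := h
    _ = 4^n := by rw [pow_mul]; norm_num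

lemma catalan_le_four_pow (n : ℕ) : (catalan n : ℝ) ≤ 4 ^ n := by
  have h1 : catalan n ≤ n.centralBinom := by
    have := succ_mul_catalan_eq_centralBinom n
    nlinarith [this]
  have := centralBinom_le_four_pow n
  exact_mod_cast h1.trans this

lemma summable_cat {z : ℝ} (hz0 : 0 ≤ z) (hz : z < 1/4) :
    Summable (fun n : ℕ => (catalan n : ℝ) * z ^ n) := by
  refine Summable.of_nonneg_of_le (fun n => by positivity) (fun n => ?_)
    (summable_geometric_of_lt_one (show (0:ℝ) ≤ 4*z by positivity) (by linarith))
  rw [mul_pow]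
  exact mul_le_mul_of_nonneg_right (catalan_le_four_pow n) (by positivity)

noncomputable def S (z : ℝ) : ℝ := ∑' n : ℕ, (catalan n : ℝ) * z ^ n

lemma quad {z : ℝ} (hz0 : 0 ≤ z) (hz : z < 1/4) : z * S z ^ 2 = S z - 1 := by
  have hs := summable_cat hz0 hz
  have hnorm : Summable (fun n : ℕ => ‖(catalan n : ℝ) * z ^ n‖) := by
    have : ∀ n : ℕ, ‖(catalan n : ℝ) * z ^ n‖ = (catalan n : ℝ) * z ^ n := fun n =>
      Real.norm_of_nonneg (mul_nonneg (Nat.cast_nonneg _) (pow_nonneg hz0 _))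
    simpa [this] using hs
  have hsq : S z * S z = ∑' n : ℕ, (catalan (n+1) : ℝ) * z ^ n := by
    rw [S, tsum_mul_tsum_eq_tsum_sum_antidiagonal_of_summable_norm hnorm hnorm]
    congr 1
    funext n
    rw [catalan_succ']
    push_cast
    rw [Finset.sum_mul]
    apply Finset.sum_congr rfl
    intro ij hij
    have : ij.1 + ij.2 = n := Finset.HasAntidiagonal.mem_antidiagonal.mp hij
    rw [← this]
    ring
  have hshift : HasSum (fun n : ℕ => (catalan (n+1) : ℝ) * z ^ (n+1)) (S z - 1) := by
    have h0 : HasSum (fun n : ℕ => (catalan n : ℝ) * z ^ n) (S z) := hs.hasSum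
    rw [show S z - 1 = S z - ∑ i ∈ Finset.range 1, (catalan i : ℝ) * z ^ i by simp]
    exact (hasSum_nat_add_iff' 1).mpr h0
  have : z * (S z * S z) = ∑' n : ℕ, (catalan (n+1) : ℝ) * z ^ (n+1) := by
    rw [hsq, ← tsum_mul_left]
    congr 1; funext n; ring
  rw [hshift.tsum_eq] at this
  nlinarith [this]

lemma S_zero : S 0 = 1 := by
  rw [S, tsum_eq_single 0 (by intro n hn; simp [zero_pow hn])]
  simp

lemma twoZS {z : ℝ} (hz0 : 0 ≤ z) (hz : z < 1/4) :
    2 * z * S z - 1 = - Real.sqrt (1 - 4 * z) := by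
  -- quadratic identity: (2wS(w)-1)^2 = 1-4w
  have key : ∀ w : ℝ, 0 ≤ w → w < 1/4 → (2*w*S w - 1)^2 = 1 - 4*w := by
    intro w h0 h1
    have := quad h0 h1
    nlinarith [this]
  -- clamp
  set c : ℝ → ℝ := fun t => max 0 (min t 1) with hc
  have hc_cont : Continuous c := continuous_const.max (continuous_id.min continuous_const)
  have hc_mem : ∀ t, 0 ≤ c t ∧ c t ≤ 1 := fun t =>
    ⟨le_max_left _ _, max_le (by norm_num) (min_le_right _ _)⟩
  have hw0 : ∀ t, 0 ≤ c t * z := fun t => mul_nonneg (hc_mem t).1 hz0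
  have hwle : ∀ t, c t * z ≤ z := fun t => by
    nlinarith [(hc_mem t).1, (hc_mem t).2, hz0]
  have hwlt : ∀ t, c t * z < 1/4 := fun t => lt_of_le_of_lt (hwle t) hz
  -- continuity of t ↦ S (c t * z)
  have hScont : Continuous (fun t => S (c t * z)) := by
    apply continuous_tsum (f := fun (n : ℕ) (t : ℝ) => (catalan n : ℝ) * (c t * z) ^ n)
      (u := fun n => (catalan n : ℝ) * z ^ n)
    · exact fun n => continuous_const.mul ((hc_cont.mul continuous_const).pow n)
    · exact summable_cat hz0 hz
    · intro n t
      rw [Real.norm_of_nonneg (mul_nonneg (Nat.cast_nonneg _) (pow_nonneg (hw0 t) _))]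
      exact mul_le_mul_of_nonneg_left (pow_le_pow_left₀ (hw0 t) (hwle t) n) (Nat.cast_nonneg _)
  have hsqrt_pos : ∀ t, 0 < Real.sqrt (1 - 4 * (c t * z)) := fun t =>
    Real.sqrt_pos.mpr (by linarith [hwlt t])
  set q : ℝ → ℝ := fun t => (2 * (c t * z) * S (c t * z) - 1) / Real.sqrt (1 - 4 * (c t * z))
    with hq
  have hq_cont : Continuous q := by
    apply Continuous.div
    · exact ((continuous_const.mul (hc_cont.mul continuous_const)).mul hScont).sub
        continuous_const
    · exact Real.continuous_sqrt.comp
        (continuous_const.sub (continuous_const.mul (hc_cont.mul continuous_const)))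
    · exact fun t => ne_of_gt (hsqrt_pos t)
  have hq_sq : ∀ t, q t ^ 2 = 1 := by
    intro t
    rw [hq]
    simp only
    rw [div_pow, key _ (hw0 t) (hwlt t), Real.sq_sqrt (by linarith [hwlt t] : (0:ℝ) ≤ 1 - 4*(c t * z))]
    exact div_self (by nlinarith [hwlt t])
  have hq0 : q 0 = -1 := by
    have : c 0 = 0 := by simp [hc]
    rw [hq]; simp only [this]; simp [S_zero]
  have hq1 : q 1 = -1 := by
    have hcase : (q 1 - 1) * (q 1 + 1) = 0 := by nlinarith [hq_sq 1]
    rcases mul_eq_zero.mp hcase with h | h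
    rotate_left
    · linarith [h]
    · rw [sub_eq_zero] at h
      exfalso
      -- IVT: q continuous on [0,1], q 0 = -1, q 1 = 1 implies q t = 0 somewhere
      have : (0:ℝ) ∈ Set.Icc (q 0) (q 1) := by rw [hq0, h]; constructor <;> norm_num
      obtain ⟨t, _, ht⟩ := intermediate_value_Icc (by norm_num : (0:ℝ) ≤ 1)
        (hq_cont.continuousOn) this
      have := hq_sq t
      rw [ht] at this
      norm_num at this
  have hc1 : c 1 = 1 := by simp [hc]
  rw [hq] at hq1
  simp only [hc1, one_mul] at hq1
  have hs := hsqrt_pos 1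
  rw [hc1, one_mul] at hs
  rw [div_eq_iff (ne_of_gt hs)] at hq1
  linarith [hq1]


/-- `B` is the generating function of the Catalan numbers, and it satisfies the
functional equation `B(z) = 1 + (z/(1-2z)) · B(z²/(1-2z)²)` for `0 ≤ z < 1/4`. -/
theorem B_eq_catalan_series_and_functional_equation :
    (∀ z : ℝ, 0 ≤ z → z < 1 / 4 →
      HasSum (fun n : ℕ => (catalan n : ℝ) * z ^ n) (B z)) ∧
    (∀ z : ℝ, 0 ≤ z → z < 1 / 4 →
      B z = 1 + z / (1 - 2 * z) * B (z ^ 2 / (1 - 2 * z) ^ 2)) := by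
  constructor
  · intro z hz0 hz
    have hBS : B z = S z := by
      rcases eq_or_lt_of_le hz0 with h | h
      · rw [B, if_pos h.symm, ← h, S_zero]
      · have h2 := twoZS hz0 hz
        rw [B, if_neg (ne_of_gt h)]
        field_simp
        linarith [h2]
    rw [hBS]
    exact (summable_cat hz0 hz).hasSum
  · intro z hz0 hz
    rcases eq_or_lt_of_le hz0 with h | h
    · rw [← h]
      norm_num [B]
    · have hu : (0:ℝ) < 1 - 2 * z := by linarith
      have hune : (1:ℝ) - 2 * z ≠ 0 := ne_of_gt hu
      have hzne : z ≠ 0 := ne_of_gt h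
      have hwne : z ^ 2 / (1 - 2 * z) ^ 2 ≠ 0 := by positivity
      rw [B, if_neg hzne, B, if_neg hwne]
      have hsub : 1 - 4 * (z ^ 2 / (1 - 2 * z) ^ 2) = (1 - 4 * z) / (1 - 2 * z) ^ 2 := by
        rw [eq_div_iff (pow_ne_zero 2 hune), sub_mul, mul_assoc 4, div_mul_cancel₀ _ (pow_ne_zero 2 hune)]
        ring
      have hsqrt : Real.sqrt (1 - 4 * (z ^ 2 / (1 - 2 * z) ^ 2))
          = Real.sqrt (1 - 4 * z) / (1 - 2 * z) := by
        rw [hsub, Real.sqrt_div (by linarith : (0:ℝ) ≤ 1 - 4 * z), Real.sqrt_sq hu.le]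
      rw [hsqrt]
      set s := Real.sqrt (1 - 4 * z) with hs
      field_simp
      ring
end

section
/- Touchard's identity: for every n ≥ 0, the Catalan numbers satisfy C_{n+1} = Σ_{0 ≤ k ≤ n/2} C_k · 2^{n-2k} · binom(n, 2k). -/
/-- The Zeilberger certificate for Touchard's identity. -/
def touchardG (n : ℕ) : ℕ → ℕ
  | 0 => 0
  | (j + 1) => Nat.centralBinom (j + 1) * 2 ^ (n - 2 * j) * Nat.choose n (2 * j + 1)

lemma centralBinom_succ_eq (k : ℕ) :
    Nat.centralBinom (k + 1) = 2 * (2 * k + 1) * catalan k := by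
  have h1 := Nat.succ_mul_centralBinom_succ k
  have h2 := succ_mul_catalan_eq_centralBinom k
  have : (k + 1) * Nat.centralBinom (k + 1) = (k + 1) * (2 * (2 * k + 1) * catalan k) := by
    rw [h1, ← h2]; ring
  exact Nat.eq_of_mul_eq_mul_left (by omega) this

lemma catalan_rec (n : ℕ) : (n + 2) * catalan (n + 1) = 2 * (2 * n + 1) * catalan n := by
  have := succ_mul_catalan_eq_centralBinom (n + 1)
  rw [centralBinom_succ_eq n] at this
  linarith [this]

/-- The key pointwise certificate identity. -/
lemma touchard_key (n k : ℕ) :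
    (n + 3) * (catalan k * 2 ^ (n + 1 - 2 * k) * Nat.choose (n + 1) (2 * k))
      + touchardG n (k + 1)
    = 2 * (2 * n + 3) * (catalan k * 2 ^ (n - 2 * k) * Nat.choose n (2 * k))
      + touchardG n k := by
  rcases Nat.lt_or_ge n (2 * k) with h | h
  · -- 2k > n
    match k, h with
    | (j + 1), h =>
      rcases eq_or_lt_of_le (show n + 1 ≤ 2 * (j + 1) by omega) with he | hlt
      · -- 2k = n + 1
        have hb : Nat.choose n (2 * (j + 1)) = 0 := Nat.choose_eq_zero_of_lt (by omega)
        have hc : Nat.choose n (2 * (j + 1) + 1) = 0 := Nat.choose_eq_zero_of_lt (by omega)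
        have hp : Nat.choose (n + 1) (2 * (j + 1)) = 1 := by rw [← he, Nat.choose_self]
        have he1 : n + 1 - 2 * (j + 1) = 0 := by omega
        have he2 : n - 2 * j = 1 := by omega
        have ha : Nat.choose n (2 * j + 1) = 1 := by
          rw [show 2 * j + 1 = n by omega, Nat.choose_self]
        show _ + Nat.centralBinom (j + 1 + 1) * 2 ^ (n - 2 * (j + 1)) *
            Nat.choose n (2 * (j + 1) + 1)
          = _ + Nat.centralBinom (j + 1) * 2 ^ (n - 2 * j) * Nat.choose n (2 * j + 1)
        rw [hb, hc, hp, ha, he1, he2]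
        have h5 := succ_mul_catalan_eq_centralBinom (j + 1)
        have hn : n = 2 * j + 1 := by omega
        subst hn
        rw [← h5]
        ring
      · -- 2k ≥ n + 2
        have hb : Nat.choose n (2 * (j + 1)) = 0 := Nat.choose_eq_zero_of_lt (by omega)
        have hc : Nat.choose n (2 * (j + 1) + 1) = 0 := Nat.choose_eq_zero_of_lt (by omega)
        have hp : Nat.choose (n + 1) (2 * (j + 1)) = 0 := Nat.choose_eq_zero_of_lt (by omega)
        have ha : Nat.choose n (2 * j + 1) = 0 := Nat.choose_eq_zero_of_lt (by omega)
        show _ + Nat.centralBinom (j + 1 + 1) * 2 ^ (n - 2 * (j + 1)) *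
            Nat.choose n (2 * (j + 1) + 1)
          = _ + Nat.centralBinom (j + 1) * 2 ^ (n - 2 * j) * Nat.choose n (2 * j + 1)
        rw [hb, hc, hp, ha]
        ring
  · -- 2k ≤ n
    obtain ⟨m, hm⟩ : ∃ m, n = 2 * k + m := ⟨n - 2 * k, by omega⟩
    match k with
    | 0 =>
      subst hm
      show (2 * 0 + m + 3) * (catalan 0 * 2 ^ (2 * 0 + m + 1 - 2 * 0) *
            Nat.choose (2 * 0 + m + 1) (2 * 0))
          + Nat.centralBinom (0 + 1) * 2 ^ (2 * 0 + m - 2 * 0) * Nat.choose (2 * 0 + m) (2 * 0 + 1)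
        = 2 * (2 * (2 * 0 + m) + 3) * (catalan 0 * 2 ^ (2 * 0 + m - 2 * 0) *
            Nat.choose (2 * 0 + m) (2 * 0)) + 0
      simp only [Nat.mul_zero, Nat.zero_add, Nat.add_sub_cancel_left, Nat.zero_mul,
        Nat.choose_zero_right, Nat.choose_one_right, catalan_zero,
        Nat.add_zero, Nat.sub_zero]
      rw [pow_succ, show Nat.centralBinom 1 = 2 from rfl]
      ring
    | (j + 1) =>
      subst hm
      set k := j + 1 with hk
      have h1 := Nat.choose_succ_right_eq (2 * k + m) (2 * k)
      have h2 := Nat.choose_succ_right_eq (2 * k + m) (2 * j + 1)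
      have e3 : 2 * j + 1 + 1 = 2 * k := by omega
      have h3 : Nat.choose (2 * k + m + 1) (2 * k)
          = Nat.choose (2 * k + m) (2 * j + 1) + Nat.choose (2 * k + m) (2 * k) := by
        rw [← e3]; exact Nat.choose_succ_succ _ _
      have h4 := centralBinom_succ_eq k
      have h5 := succ_mul_catalan_eq_centralBinom k
      have e0 : 2 * k + m - 2 * k = m := by omega
      have e1 : 2 * k + m + 1 - 2 * k = m + 1 := by omega
      have e2 : 2 * k + m - 2 * j = m + 2 := by omega
      have e4 : 2 * k + m - (2 * j + 1) = m + 1 := by omega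
      have e5 : 2 * k + m + 1 = 2 * k + m + 1 := rfl
      rw [e3, e4] at h2
      rw [e0] at h1
      show _ + Nat.centralBinom (k + 1) * 2 ^ (2 * k + m - 2 * k) *
          Nat.choose (2 * k + m) (2 * k + 1)
        = _ + Nat.centralBinom k * 2 ^ (2 * k + m - 2 * j) * Nat.choose (2 * k + m) (2 * j + 1)
      rw [e0, e1, e2, h3]
      zify at h1 h2 h4 h5 ⊢
      linear_combination (2 * ((catalan k : ℤ)) * 2 ^ m) * h1
        + (-2 * ((catalan k : ℤ)) * 2 ^ m) * h2
        + (((Nat.choose (2 * k + m) (2 * k + 1) : ℤ)) * 2 ^ m) * h4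
        + (4 * ((Nat.choose (2 * k + m) (2 * j + 1) : ℤ)) * 2 ^ m) * h5

lemma touchard_telescope (n N : ℕ) :
    (∑ k ∈ Finset.range N, (n + 3) * (catalan k * 2 ^ (n + 1 - 2 * k) * Nat.choose (n + 1) (2 * k)))
      + touchardG n N
    = ∑ k ∈ Finset.range N, 2 * (2 * n + 3) * (catalan k * 2 ^ (n - 2 * k) * Nat.choose n (2 * k)) := by
  induction N with
  | zero => simp [touchardG]
  | succ N ih =>
      rw [Finset.sum_range_succ, Finset.sum_range_succ, add_assoc, touchard_key n N,
        ← add_assoc, add_comm _ (touchardG n N), ← add_assoc, add_comm (touchardG n N), ih]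

lemma touchard_sum_ext (m N : ℕ) (h : m / 2 + 1 ≤ N) :
    ∑ k ∈ Finset.range (m / 2 + 1), catalan k * 2 ^ (m - 2 * k) * Nat.choose m (2 * k)
    = ∑ k ∈ Finset.range N, catalan k * 2 ^ (m - 2 * k) * Nat.choose m (2 * k) := by
  apply Finset.sum_subset (Finset.range_subset_range.mpr h)
  intro x _ hx
  rw [Finset.mem_range, not_lt] at hx
  rw [Nat.choose_eq_zero_of_lt (by omega), mul_zero]

/-- Touchard's identity for the Catalan numbers:
`C_{n+1} = Σ_{0 ≤ k ≤ n/2} C_k · 2^{n-2k} · binom(n, 2k)`. -/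
theorem touchard_identity (n : ℕ) :
    catalan (n + 1) =
      ∑ k ∈ Finset.range (n / 2 + 1), catalan k * 2 ^ (n - 2 * k) * Nat.choose n (2 * k) := by
  induction n with
  | zero => simp [catalan_one]
  | succ n ih =>
      have htel := touchard_telescope n (n + 2)
      have hG : touchardG n (n + 2) = 0 := by
        show Nat.centralBinom (n + 2) * 2 ^ (n - 2 * (n + 1)) * Nat.choose n (2 * (n + 1) + 1) = 0
        rw [Nat.choose_eq_zero_of_lt (by omega), mul_zero]
      rw [hG, add_zero, ← Finset.mul_sum, ← Finset.mul_sum,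
        ← touchard_sum_ext (n + 1) (n + 2) (by omega), ← touchard_sum_ext n (n + 2) (by omega),
        ← ih] at htel
      have : (n + 3) * (∑ k ∈ Finset.range ((n + 1) / 2 + 1),
          catalan k * 2 ^ (n + 1 - 2 * k) * Nat.choose (n + 1) (2 * k))
          = (n + 3) * catalan (n + 2) := by
        rw [htel]
        have hcat2 : (n + 3) * catalan (n + 2) = 2 * (2 * (n + 1) + 1) * catalan (n + 1) :=
          catalan_rec (n + 1)
        zify at hcat2 ⊢
        linear_combination -hcat2
      exact (Nat.eq_of_mul_eq_mul_left (by omega) this).symm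
end

section
/- For every r ≥ 0, under the substitution z = u/(1+u)^2 one has the explicit representation B_r(z) = ((1-u^2)/u) · Σ_{j=0}^{r} u^{2^j}/(1 - u^{2^{j+1}}); this holds as an identity of formal power series in u (equivalently, for all real u with 0 < u < 1). -/
/-- The functions `B_r`, defined by `B_0(z) = 1` and
`B_r(z) = 1 + (z/(1-2z)) · B_{r-1}(z²/(1-2z)²)`;
`[z^n] B_r(z)` counts binary trees with `n` internal nodes and register function `≤ r`. -/
noncomputable def Br : ℕ → ℝ → ℝ
  | 0, _ => 1
  | r + 1, z => 1 + z / (1 - 2 * z) * Br r (z ^ 2 / (1 - 2 * z) ^ 2)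

/-- Under the substitution `z = u/(1+u)²`, one has the explicit representation
`B_r(z) = ((1-u²)/u) · Σ_{j=0}^{r} u^{2^j}/(1 - u^{2^{j+1}})` for all `0 < u < 1`. -/
theorem Br_explicit (r : ℕ) (u : ℝ) (h₀ : 0 < u) (h₁ : u < 1) :
    Br r (u / (1 + u) ^ 2) =
      (1 - u ^ 2) / u *
        ∑ j ∈ Finset.range (r + 1), u ^ (2 ^ j) / (1 - u ^ (2 ^ (j + 1))) := by
  induction r generalizing u with
  | zero =>
    have hu : u ≠ 0 := h₀.ne'
    have hu2 : 1 - u ^ 2 ≠ 0 := by nlinarith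
    simp only [Br, zero_add, Finset.sum_range_one, pow_zero, pow_one]
    field_simp
  | succ r ih =>
    have hu : u ≠ 0 := h₀.ne'
    have hup : (1 + u) ≠ 0 := by nlinarith
    have hu2p : (1 + u ^ 2) ≠ 0 := by nlinarith
    have h2z : 1 - 2 * (u / (1 + u) ^ 2) = (1 + u ^ 2) / (1 + u) ^ 2 := by
      field_simp; ring
    have hz2 : (u / (1 + u) ^ 2) ^ 2 / (1 - 2 * (u / (1 + u) ^ 2)) ^ 2
        = u ^ 2 / (1 + u ^ 2) ^ 2 := by
      rw [h2z]; field_simp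
    have hsq0 : (0:ℝ) < u ^ 2 := by positivity
    have hsq1 : u ^ 2 < 1 := by nlinarith
    have IH := ih (u ^ 2) hsq0 hsq1
    have hpow : ∀ j : ℕ, (u ^ 2) ^ (2 ^ j) = u ^ (2 ^ (j + 1)) := by
      intro j; rw [← pow_mul]; congr 1; ring
    have IH' : Br r (u ^ 2 / (1 + u ^ 2) ^ 2)
        = (1 - u ^ 4) / u ^ 2 *
          ∑ j ∈ Finset.range (r + 1), u ^ (2 ^ (j + 1)) / (1 - u ^ (2 ^ (j + 2))) := by
      rw [IH]
      congr 1
      · ring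
      · exact Finset.sum_congr rfl fun j _ => by rw [hpow j, hpow (j + 1)]
    set S := ∑ j ∈ Finset.range (r + 1), u ^ (2 ^ (j + 1)) / (1 - u ^ (2 ^ (j + 2))) with hS
    have hu2 : 1 - u ^ 2 ≠ 0 := by nlinarith
    have hsum : ∑ j ∈ Finset.range (r + 1 + 1), u ^ (2 ^ j) / (1 - u ^ (2 ^ (j + 1)))
        = u / (1 - u ^ 2) + S := by
      rw [Finset.sum_range_succ']
      have h0 : u ^ (2 ^ 0) / (1 - u ^ (2 ^ (0 + 1))) = u / (1 - u ^ 2) := by norm_num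
      rw [h0, add_comm]
    show 1 + (u / (1 + u) ^ 2) / (1 - 2 * (u / (1 + u) ^ 2)) *
        Br r ((u / (1 + u) ^ 2) ^ 2 / (1 - 2 * (u / (1 + u) ^ 2)) ^ 2) = _
    rw [hz2, IH', h2z, hsum]
    have h14 : (1 - u ^ 4) = (1 - u ^ 2) * (1 + u ^ 2) := by ring
    rw [h14]
    field_simp
end
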